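/- Let k < p be natural numbers, let α : ℕ → ℝ satisfy α_{k+1} ≠ 0, and let f(ξ) = Σ_{m=k+1}^{p} α_m ξ^m. Then, as δ → 0⁺, the ratio (∫_0^δ (f′(ξ))² dξ) / (∫_0^δ f(ξ) dξ) is Θ(δ^{k-1}) (exponent taken in ℤ, so this is Θ(δ^{-1}) when k = 0). -/

import Mathlib

open Topology Asymptotics

open Filter

lemma theta_of_div_tendsto {f g : ℝ → ℝ} {l : Filter ℝ} {L : ℝ} (hL : L ≠ 0)
    (hg : ∀ᶠ x in l, g x ≠ 0)
    (h : Filter.Tendsto (fun x => f x / g x) l (𝓝 L)) : f =Θ[l] g := by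
  have hne : ∀ᶠ x in l, f x / g x ≠ 0 := h.eventually_ne hL
  have hf : ∀ᶠ x in l, f x ≠ 0 := hne.mono fun x hx => by
    intro h0; exact hx (by simp [h0])
  constructor
  · exact isBigO_of_div_tendsto_nhds (hg.mono fun x hx h0 => absurd h0 hx) L h
  · refine isBigO_of_div_tendsto_nhds (hf.mono fun x hx h0 => absurd h0 hx) L⁻¹ ?_
    have := h.inv₀ hL
    convert this using 1
    funext x
    simp [Pi.div_apply, inv_div]

lemma theta_sum {ι : Type*} (s : Finset ι) (e : ι → ℕ) (c : ι → ℝ) (n : ℕ)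
    (he : ∀ i ∈ s, n ≤ e i)
    (hc : (∑ i ∈ s, if e i = n then c i else 0) ≠ 0) :
    (fun δ : ℝ => ∑ i ∈ s, c i * δ ^ e i) =Θ[𝓝[>] (0:ℝ)] (fun δ : ℝ => δ ^ n) := by
  refine theta_of_div_tendsto hc ?_ ?_
  · filter_upwards [self_mem_nhdsWithin] with x hx
    exact pow_ne_zero _ (ne_of_gt hx)
  · have key : Filter.Tendsto (fun δ : ℝ => ∑ i ∈ s, c i * δ ^ (e i - n)) (𝓝[>] (0:ℝ))
        (𝓝 (∑ i ∈ s, if e i = n then c i else 0)) := by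
      have hcont : Continuous (fun δ : ℝ => ∑ i ∈ s, c i * δ ^ (e i - n)) := by
        continuity
      have := hcont.tendsto 0
      have heq : (∑ i ∈ s, c i * (0:ℝ) ^ (e i - n)) = ∑ i ∈ s, if e i = n then c i else 0 := by
        refine Finset.sum_congr rfl fun i hi => ?_
        by_cases h : e i = n
        · simp [h]
        · have hle := he i hi
          have hne : e i - n ≠ 0 := by omega
          simp [h, zero_pow hne]
      rw [heq] at this
      exact this.mono_left nhdsWithin_le_nhds
    have heq2 : (fun δ : ℝ => ∑ i ∈ s, c i * δ ^ (e i - n)) =ᶠ[𝓝[>] (0:ℝ)]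
        (fun x : ℝ => (∑ i ∈ s, c i * x ^ e i) / x ^ n) := by
      filter_upwards [self_mem_nhdsWithin] with x hx
      have hx0 : (x:ℝ) ≠ 0 := ne_of_gt hx
      rw [Finset.sum_div]
      refine Finset.sum_congr rfl fun i hi => ?_
      rw [mul_div_assoc, pow_sub₀ x hx0 (he i hi), div_eq_mul_inv]
    exact key.congr' heq2

/-- For `f(ξ) = ∑_{m=k+1}^{p} α_m ξ^m` with `α_{k+1} ≠ 0`, the ratio
`(∫_0^δ (f′)²) / (∫_0^δ f)` (stiffness over lumped-mass diagonal entry) is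
`Θ(δ^{k-1})` as `δ → 0⁺`, the exponent taken in `ℤ`. -/
theorem rayleigh_ratio_lumped_asymptotics_1d (k p : ℕ) (hkp : k < p)
    (α : ℕ → ℝ) (hα : α (k + 1) ≠ 0) :
    (fun δ : ℝ =>
        (∫ ξ in (0:ℝ)..δ,
          (deriv (fun t : ℝ => ∑ m ∈ Finset.Icc (k + 1) p, α m * t ^ m) ξ) ^ 2) /
        (∫ ξ in (0:ℝ)..δ, ∑ m ∈ Finset.Icc (k + 1) p, α m * ξ ^ m))
      =Θ[𝓝[>] (0:ℝ)] (fun δ : ℝ => δ ^ ((k : ℤ) - 1)) := by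
  set I := Finset.Icc (k + 1) p with hI
  have hmem : k + 1 ∈ I := Finset.mem_Icc.2 ⟨le_refl _, hkp⟩
  -- derivative
  have hderiv : ∀ ξ : ℝ, deriv (fun t : ℝ => ∑ m ∈ I, α m * t ^ m) ξ
      = ∑ m ∈ I, α m * ((m : ℝ) * ξ ^ (m - 1)) := fun ξ =>
    (HasDerivAt.fun_sum fun m _ => (hasDerivAt_pow m ξ).const_mul (α m)).deriv
  -- numerator computation
  have hnum : ∀ δ : ℝ, (∫ ξ in (0:ℝ)..δ, (deriv (fun t : ℝ => ∑ m ∈ I, α m * t ^ m) ξ) ^ 2)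
      = ∑ i ∈ I ×ˢ I, ((α i.1 * i.1 * (α i.2 * i.2)) / ((i.1 - 1) + (i.2 - 1) + 1 : ℕ))
          * δ ^ ((i.1 - 1) + (i.2 - 1) + 1) := by
    intro δ
    rw [Finset.sum_product]
    have h1 : ∀ ξ : ℝ, (deriv (fun t : ℝ => ∑ m ∈ I, α m * t ^ m) ξ) ^ 2
        = ∑ m ∈ I, ∑ j ∈ I, (α m * m * (α j * j)) * ξ ^ ((m - 1) + (j - 1)) := by
      intro ξ
      rw [hderiv, pow_two, Finset.sum_mul_sum]
      refine Finset.sum_congr rfl fun m hm => Finset.sum_congr rfl fun j hj => ?_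
      rw [pow_add]; ring
    simp only [h1]
    rw [intervalIntegral.integral_finset_sum]
    · refine Finset.sum_congr rfl fun m hm => ?_
      rw [intervalIntegral.integral_finset_sum]
      · refine Finset.sum_congr rfl fun j hj => ?_
        rw [intervalIntegral.integral_const_mul, integral_pow]
        rw [zero_pow (by omega), sub_zero]
        push_cast
        ring
      · intro j hj
        exact (continuous_const.mul (continuous_pow _)).intervalIntegrable 0 δ
    · intro m hm
      exact (continuous_finset_sum _ fun j _ =>
        continuous_const.mul (continuous_pow _)).intervalIntegrable 0 δ
  -- denominator computation
  have hden : ∀ δ : ℝ, (∫ ξ in (0:ℝ)..δ, ∑ m ∈ I, α m * ξ ^ m)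
      = ∑ m ∈ I, (α m / (m + 1 : ℕ)) * δ ^ (m + 1) := by
    intro δ
    rw [intervalIntegral.integral_finset_sum]
    · refine Finset.sum_congr rfl fun m hm => ?_
      rw [intervalIntegral.integral_const_mul, integral_pow]
      rw [zero_pow (by omega), sub_zero]
      push_cast
      ring
    · intro m hm
      exact (continuous_const.mul (continuous_pow _)).intervalIntegrable 0 δ
  -- theta for the numerator
  have hNθ : (fun δ : ℝ => ∑ i ∈ I ×ˢ I,
        ((α i.1 * i.1 * (α i.2 * i.2)) / ((i.1 - 1) + (i.2 - 1) + 1 : ℕ))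
          * δ ^ ((i.1 - 1) + (i.2 - 1) + 1)) =Θ[𝓝[>] (0:ℝ)]
      (fun δ : ℝ => δ ^ (2 * k + 1)) := by
    refine theta_sum (I ×ˢ I) (fun i => (i.1 - 1) + (i.2 - 1) + 1) _ (2 * k + 1) ?_ ?_
    · rintro ⟨m, j⟩ hij
      rw [Finset.mem_product, hI, Finset.mem_Icc, Finset.mem_Icc] at hij
      simp only
      omega
    · rw [Finset.sum_eq_single_of_mem (⟨k + 1, k + 1⟩ : ℕ × ℕ)
        (Finset.mem_product.2 ⟨hmem, hmem⟩)]
      · rw [if_pos (by simp only; omega)]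
        have h2k : ((k + 1 - 1) + (k + 1 - 1) + 1 : ℕ) = 2 * k + 1 := by omega
        rw [h2k]
        refine div_ne_zero (mul_ne_zero (mul_ne_zero hα ?_) (mul_ne_zero hα ?_)) ?_
        · exact Nat.cast_ne_zero.2 (by omega)
        · exact Nat.cast_ne_zero.2 (by omega)
        · exact Nat.cast_ne_zero.2 (by omega)
      · rintro ⟨m, j⟩ hb hne
        rw [Finset.mem_product, hI, Finset.mem_Icc, Finset.mem_Icc] at hb
        rw [if_neg]
        simp only [ne_eq, Prod.mk.injEq] at hne ⊢
        omega
  -- theta for the denominator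
  have hDθ : (fun δ : ℝ => ∑ m ∈ I, (α m / (m + 1 : ℕ)) * δ ^ (m + 1)) =Θ[𝓝[>] (0:ℝ)]
      (fun δ : ℝ => δ ^ (k + 2)) := by
    refine theta_sum I (fun m => m + 1) _ (k + 2) ?_ ?_
    · intro m hm
      rw [hI, Finset.mem_Icc] at hm
      show k + 2 ≤ m + 1
      omega
    · rw [Finset.sum_eq_single_of_mem (k + 1) hmem]
      · rw [if_pos (show k + 1 + 1 = k + 2 from rfl)]
        exact div_ne_zero hα (Nat.cast_ne_zero.2 (by omega))
      · intro b hb hne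
        rw [hI, Finset.mem_Icc] at hb
        rw [if_neg (show ¬(b + 1 = k + 2) by omega)]
  simp only [hnum, hden]
  refine (hNθ.div hDθ).trans_eventuallyEq ?_
  filter_upwards [self_mem_nhdsWithin] with x hx
  have hx0 : (x : ℝ) ≠ 0 := ne_of_gt hx
  rw [← zpow_natCast x (2 * k + 1), ← zpow_natCast x (k + 2), ← zpow_sub₀ hx0]
  congr 1
  push_cast
  ring
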